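/- Let τ be a finite unordered rooted tree, v a vertex of τ, and let θ be the tree obtained from τ by adding a new vertex w as a child of v and making the vertices of a subset C of the children of v become children of w. The induced mapping M_{τ→θ}, associating each vertex of τ with itself in θ, is a constrained mapping in the sense of Zhang if and only if C is empty, C has exactly one element, or C equals the whole set of children of v. -/

import Mathlib

/-- A finite rooted tree whose vertices form a finite subset `supp` of `ℕ`.
`par` maps each vertex to its parent; the root is a fixed point of `par`
(so it has no parent), and every vertex reaches the root by iterating `par`
(connectedness / acyclicity). -/
structure FTree where
  supp : Finset ℕ
  root : ℕ
  root_mem : root ∈ supp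
  par : ℕ → ℕ
  par_mem : ∀ v ∈ supp, par v ∈ supp
  par_root : par root = root
  reach : ∀ v ∈ supp, ∃ n, par^[n] v = root

namespace FTree

/-- Depth of a vertex: least number of parent steps needed to reach the root. -/
noncomputable def depth (t : FTree) (v : ℕ) : ℕ :=
  if h : v ∈ t.supp then Nat.find (t.reach v h) else 0

/-- `w` is a (weak) descendant of `v` in `t`. -/
def IsDesc (t : FTree) (v w : ℕ) : Prop :=
  w ∈ t.supp ∧ ∃ n ≤ t.depth w, t.par^[n] w = v

open Classical in
/-- Vertex set of the subtree `t[v]` rooted at `v`. -/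
noncomputable def desc (t : FTree) (v : ℕ) : Finset ℕ :=
  t.supp.filter (fun w => t.IsDesc v w)

/-- Height of the subtree `t[v]` rooted at `v`. -/
noncomputable def heightAt (t : FTree) (v : ℕ) : ℕ :=
  (t.desc v).sup (fun w => t.depth w) - t.depth v

/-- Height of the tree. -/
noncomputable def height (t : FTree) : ℕ := t.heightAt t.root

/-- The set of children of `v` in `t`. -/
def children (t : FTree) (v : ℕ) : Finset ℕ :=
  t.supp.filter (fun w => t.par w = v ∧ w ≠ t.root)

open Classical in
/-- `γ_h(v)`: number of children of `v` whose subtree has height `h`. -/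
noncomputable def gam (t : FTree) (v h : ℕ) : ℕ :=
  ((t.children v).filter (fun c => t.heightAt c = h)).card

/-- The subtree of `t` rooted at `v` is isomorphic (as an unordered rooted tree)
to the subtree of `s` rooted at `w`: a bijection between the vertex sets sending
root to root and commuting with the parent maps (i.e. mapping edges to edges). -/
def SubtreeIso (t : FTree) (v : ℕ) (s : FTree) (w : ℕ) : Prop :=
  ∃ φ : ℕ → ℕ, Set.BijOn φ (t.desc v : Set ℕ) (s.desc w : Set ℕ) ∧ φ v = w ∧
    ∀ x ∈ t.desc v, x ≠ v → φ (t.par x) = s.par (φ x)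

/-- Isomorphism of rooted trees. -/
def TreeIso (t s : FTree) : Prop := SubtreeIso t t.root s s.root

/-- A tree is self-nested if any two of its subtrees of the same height
are isomorphic. -/
def SelfNested (t : FTree) : Prop :=
  ∀ v ∈ t.supp, ∀ w ∈ t.supp, t.heightAt v = t.heightAt w → SubtreeIso t v t w

open Classical in
/-- Height profile entry `ρ_t(h1,h2)`: the multiset (family up to permutation) of
the values `γ_{h2}(v)` over all vertices `v` of `t` with `H(t[v]) = h1`. -/
noncomputable def profile (t : FTree) (h1 h2 : ℕ) : Multiset ℕ :=
  (t.supp.filter (fun v => t.heightAt v = h1)).val.map (fun v => t.gam v h2)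

/-- Number of vertices of `t`. -/
def numV (t : FTree) : ℕ := t.supp.card

/-- `a` is a (weak) ancestor of `b`. -/
def IsAnc (t : FTree) (a b : ℕ) : Prop := ∃ n, t.par^[n] b = a

/-- `a` is a proper ancestor of `b`. -/
def ProperAnc (t : FTree) (a b : ℕ) : Prop := a ≠ b ∧ t.IsAnc a b

/-- `l` is the least common ancestor of `a` and `b`. -/
def IsLCA (t : FTree) (a b l : ℕ) : Prop :=
  l ∈ t.supp ∧ t.IsAnc l a ∧ t.IsAnc l b ∧
    ∀ m ∈ t.supp, t.IsAnc m a → t.IsAnc m b → t.IsAnc m l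

/-- `φ`, restricted to the domain `D ⊆ t.supp`, is a constrained mapping in the
sense of Zhang from `t` to `s`: a one-to-one correspondence preserving the
ancestor order, satisfying moreover Zhang's condition on least common ancestors. -/
def ZhangMapping (t s : FTree) (D : Finset ℕ) (φ : ℕ → ℕ) : Prop :=
  D ⊆ t.supp ∧ (∀ x ∈ D, φ x ∈ s.supp) ∧ Set.InjOn φ (D : Set ℕ) ∧
  (∀ a ∈ D, ∀ b ∈ D, (t.ProperAnc a b ↔ s.ProperAnc (φ a) (φ b))) ∧
  (∀ v1 ∈ D, ∀ v2 ∈ D, ∀ v3 ∈ D, ∀ l l',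
    t.IsLCA v1 v2 l → s.IsLCA (φ v1) (φ v2) l' →
    (t.ProperAnc l v3 ↔ s.ProperAnc l' (φ v3)))

/-- Allowed inserting operation (AI): adding a new internal vertex `w` as a child of
`v`, making `w` the parent of the child `c` of `v`; allowed only if
`H(t[c]) + 1 < H(t[v])`. -/
def InsertAI (t θ : FTree) : Prop :=
  ∃ v c w, v ∈ t.supp ∧ c ∈ t.children v ∧ w ∉ t.supp ∧
    t.heightAt c + 1 < t.heightAt v ∧
    θ.supp = insert w t.supp ∧ θ.root = t.root ∧
    θ.par w = v ∧ θ.par c = w ∧ ∀ x ∈ t.supp, x ≠ c → θ.par x = t.par x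

/-- Allowed inserting operation (AS): attaching a tree `s` as a new child subtree of
`v`; allowed only if `H(s) + 1 ≤ H(t[v])`. -/
def InsertAS (t θ : FTree) : Prop :=
  ∃ (v : ℕ) (s : FTree), v ∈ t.supp ∧ Disjoint s.supp t.supp ∧
    s.height + 1 ≤ t.heightAt v ∧
    θ.supp = t.supp ∪ s.supp ∧ θ.root = t.root ∧ θ.par s.root = v ∧
    (∀ x ∈ t.supp, θ.par x = t.par x) ∧ (∀ x ∈ s.supp, x ≠ s.root → θ.par x = s.par x)

/-- One allowed inserting operation. -/
def InsertStep (t θ : FTree) : Prop := InsertAI t θ ∨ InsertAS t θ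

/-- Allowed deleting operation (DI): deleting an internal vertex `v`, child of `u`,
having a unique child `c` (which becomes a child of `u`); allowed only if `u` has
another child `v'` with `H(t[v']) ≥ H(t[v])`. -/
def DeleteDI (t θ : FTree) : Prop :=
  ∃ u v c, v ∈ t.children u ∧ t.children v = {c} ∧
    (∃ v' ∈ t.children u, v' ≠ v ∧ t.heightAt v ≤ t.heightAt v') ∧
    θ.supp = t.supp.erase v ∧ θ.root = t.root ∧ θ.par c = u ∧
    ∀ x ∈ t.supp, x ≠ v → x ≠ c → θ.par x = t.par x

/-- Allowed deleting operation (DS): deleting the whole subtree rooted at a child `w`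
of `v`; allowed only if `v` has another child `w'` with `H(t[w']) + 1 = H(t[v])`. -/
def DeleteDS (t θ : FTree) : Prop :=
  ∃ v w, w ∈ t.children v ∧
    (∃ w' ∈ t.children v, w' ≠ w ∧ t.heightAt w' + 1 = t.heightAt v) ∧
    θ.supp = t.supp \ t.desc w ∧ θ.root = t.root ∧
    ∀ x ∈ θ.supp, θ.par x = t.par x

/-- One allowed deleting operation. -/
def DeleteStep (t θ : FTree) : Prop := DeleteDI t θ ∨ DeleteDS t θ

/-- A general single-vertex inserting operation: a new vertex `w` is added as a child
of `v`, and the vertices of a subset `C` of the children of `v` become children of `w`. -/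
def GeneralInsert (t θ : FTree) : Prop :=
  ∃ (v w : ℕ) (C : Finset ℕ), v ∈ t.supp ∧ w ∉ t.supp ∧ C ⊆ t.children v ∧
    θ.supp = insert w t.supp ∧ θ.root = t.root ∧ θ.par w = v ∧
    (∀ x ∈ C, θ.par x = w) ∧ ∀ x ∈ t.supp, x ∉ C → θ.par x = t.par x

/-- Cost of a constrained mapping with domain `D`: vertices of `t` not in the domain
are deleted, vertices of `s` not in the image are inserted (unit costs). -/
def mappingCost (t s : FTree) (D : Finset ℕ) (φ : ℕ → ℕ) : ℕ :=
  (t.numV - D.card) + (s.numV - (D.image φ).card)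

/-- Zhang's constrained edit distance between unordered trees: the minimal cost
associated with a constrained mapping between `t` and `s`. -/
noncomputable def DZ (t s : FTree) : ℕ :=
  sInf { c | ∃ (D : Finset ℕ) (φ : ℕ → ℕ), ZhangMapping t s D φ ∧ c = mappingCost t s D φ }

end FTree

section Aux

open FTree

lemma FTreeAux.iter_root (t : FTree) (n : ℕ) : t.par^[n] t.root = t.root := by
  induction n with
  | zero => rfl
  | succ k ih => rw [Function.iterate_succ_apply', ih, t.par_root]

lemma FTreeAux.iter_mem (t : FTree) {x : ℕ} (hx : x ∈ t.supp) (n : ℕ) :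
    t.par^[n] x ∈ t.supp := by
  induction n with
  | zero => exact hx
  | succ k ih => rw [Function.iterate_succ_apply']; exact t.par_mem _ ih

lemma FTreeAux.anc_antisymm (t : FTree) {x y : ℕ} (hx : x ∈ t.supp)
    (h1 : t.IsAnc x y) (h2 : t.IsAnc y x) : x = y := by
  obtain ⟨m, hm⟩ := h1
  obtain ⟨n, hn⟩ := h2
  rcases Nat.eq_zero_or_pos (m + n) with h0 | hpos
  · have : m = 0 := by omega
    subst this; exact hm.symm
  · have hcyc : t.par^[m + n] x = x := by
      rw [Function.iterate_add_apply, hn, hm]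
    have hcyck : ∀ k, t.par^[k * (m + n)] x = x := by
      intro k
      induction k with
      | zero => simp
      | succ j ih =>
        have : (j + 1) * (m + n) = j * (m + n) + (m + n) := by ring
        rw [this, Function.iterate_add_apply, hcyc, ih]
    obtain ⟨n0, hn0⟩ := t.reach x hx
    have hroot : x = t.root := by
      have hle : n0 ≤ n0 * (m + n) := Nat.le_mul_of_pos_right n0 hpos
      have h1 : t.par^[(n0 * (m + n) - n0) + n0] x = x := by
        rw [show n0 * (m + n) - n0 + n0 = n0 * (m + n) by omega]
        exact hcyck n0
      rw [Function.iterate_add_apply, hn0, FTreeAux.iter_root] at h1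
      exact h1.symm
    subst hroot
    rw [← hn, FTreeAux.iter_root]

lemma FTreeAux.anc_total (t : FTree) {a b x : ℕ} (ha : t.IsAnc a x)
    (hb : t.IsAnc b x) : t.IsAnc a b ∨ t.IsAnc b a := by
  obtain ⟨m, hm⟩ := ha
  obtain ⟨n, hn⟩ := hb
  rcases le_or_gt m n with h | h
  · right
    refine ⟨n - m, ?_⟩
    rw [← hm, ← Function.iterate_add_apply, show n - m + m = n by omega]
    exact hn
  · left
    refine ⟨m - n, ?_⟩
    rw [← hn, ← Function.iterate_add_apply, show m - n + n = m by omega]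
    exact hm

lemma FTreeAux.anc_step (t : FTree) {a p x : ℕ} (hp : t.par x = p)
    (h : t.IsAnc a p) : t.IsAnc a x := by
  obtain ⟨n, hn⟩ := h
  exact ⟨n + 1, by rw [Function.iterate_succ_apply, hp, hn]⟩

lemma FTreeAux.mem_children (t : FTree) {v c : ℕ} (h : c ∈ t.children v) :
    c ∈ t.supp ∧ t.par c = v ∧ c ≠ t.root := by
  simpa [FTree.children] using h

variable {t θ : FTree} {v w : ℕ} {C : Finset ℕ}
  (hv : v ∈ t.supp) (hw : w ∉ t.supp) (hC : C ⊆ t.children v)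
  (hsupp : θ.supp = insert w t.supp) (hparw : θ.par w = v)
  (hparC : ∀ x ∈ C, θ.par x = w)
  (hpar : ∀ x ∈ t.supp, x ∉ C → θ.par x = t.par x)

section Transfer

include hC hparw hparC hpar in
lemma FTreeAux.fwd {a b : ℕ} (hb : b ∈ t.supp) (h : t.IsAnc a b) :
    θ.IsAnc a b := by
  obtain ⟨n, hn⟩ := h
  suffices H : ∀ n, ∃ m, θ.par^[m] b = t.par^[n] b by
    obtain ⟨m, hm⟩ := H n
    exact ⟨m, by rw [hm, hn]⟩
  intro n
  induction n with
  | zero => exact ⟨0, rfl⟩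
  | succ k ih =>
    obtain ⟨m, hm⟩ := ih
    set y := t.par^[k] b with hy
    have hymem : y ∈ t.supp := FTreeAux.iter_mem t hb k
    by_cases hyC : y ∈ C
    · obtain ⟨-, hpary, -⟩ := FTreeAux.mem_children t (hC hyC)
      refine ⟨m + 2, ?_⟩
      rw [show m + 2 = (m + 1) + 1 from rfl, Function.iterate_succ_apply',
        Function.iterate_succ_apply', hm, hparC y hyC, hparw,
        Function.iterate_succ_apply', ← hpary]
    · refine ⟨m + 1, ?_⟩
      rw [Function.iterate_succ_apply', hm, hpar y hymem hyC,
        Function.iterate_succ_apply']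

include hv hw hC hparw hparC hpar in
lemma FTreeAux.bwd {a : ℕ} (ha : a ∈ t.supp) :
    ∀ n, ∀ {x : ℕ}, x ∈ t.supp → θ.par^[n] x = a → t.IsAnc a x := by
  intro n
  induction n using Nat.strong_induction_on with
  | _ n IH =>
    intro x hx hn
    match n with
    | 0 => exact ⟨0, hn⟩
    | Nat.succ k =>
      by_cases hxC : x ∈ C
      · rw [Function.iterate_succ_apply, hparC x hxC] at hn
        match k with
        | 0 =>
          rw [Function.iterate_zero_apply] at hn
          exact absurd (by rw [hn]; exact ha : w ∈ t.supp) hw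
        | Nat.succ j =>
          rw [Function.iterate_succ_apply, hparw] at hn
          have hav : t.IsAnc a v := IH j (by omega) hv hn
          obtain ⟨-, hparx, -⟩ := FTreeAux.mem_children t (hC hxC)
          exact FTreeAux.anc_step t hparx hav
      · rw [Function.iterate_succ_apply, hpar x hx hxC] at hn
        have := IH k (by omega) (t.par_mem x hx) hn
        exact FTreeAux.anc_step t rfl this

include hv hw hsupp hparw hpar in
lemma FTreeAux.toW {y : ℕ} (hy : y ∈ θ.supp) (h : θ.par y = w) : y ∈ C := by
  rw [hsupp, Finset.mem_insert] at hy
  rcases hy with rfl | hy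
  · rw [hparw] at h; exact absurd (h ▸ hv) hw
  · by_contra hyC
    rw [hpar y hy hyC] at h
    exact hw (h ▸ t.par_mem y hy)

include hv hw hC hsupp hparw hparC hpar in
lemma FTreeAux.underW {x : ℕ} (hx : x ∈ t.supp) (h : θ.IsAnc w x) :
    ∃ c ∈ C, t.IsAnc c x := by
  obtain ⟨n, hn⟩ := h
  match n with
  | 0 =>
    rw [Function.iterate_zero_apply] at hn
    exact absurd (by rw [← hn]; exact hx : w ∈ t.supp) hw
  | Nat.succ k =>
    rw [Function.iterate_succ_apply'] at hn
    have hxθ : x ∈ θ.supp := by rw [hsupp]; exact Finset.mem_insert_of_mem hx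
    have hymem : θ.par^[k] x ∈ θ.supp := FTreeAux.iter_mem θ hxθ k
    have hyC : θ.par^[k] x ∈ C := FTreeAux.toW hv hw hsupp hparw hpar hymem hn
    have : t.IsAnc (θ.par^[k] x) x := by
      refine FTreeAux.bwd hv hw hC hparw hparC hpar ?_ k hx rfl
      exact (FTreeAux.mem_children t (hC hyC)).1
    exact ⟨_, hyC, this⟩

include hv hw hC hparw hparC hpar in
lemma FTreeAux.anc_iff {a b : ℕ} (ha : a ∈ t.supp) (hb : b ∈ t.supp) :
    t.IsAnc a b ↔ θ.IsAnc a b := by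
  constructor
  · exact FTreeAux.fwd hC hparw hparC hpar hb
  · rintro ⟨n, hn⟩
    exact FTreeAux.bwd hv hw hC hparw hparC hpar ha n hb hn

lemma FTreeAux.fix_eq_root (t : FTree) {x : ℕ} (hx : x ∈ t.supp) (h : t.par x = x) :
    x = t.root := by
  obtain ⟨n, hn⟩ := t.reach x hx
  have : ∀ m, t.par^[m] x = x := by
    intro m
    induction m with
    | zero => rfl
    | succ k ih => rw [Function.iterate_succ_apply', ih, h]
  rw [this n] at hn
  exact hn

end Transfer

end Aux

lemma FTreeAux.anc_top (s : FTree) {c p x : ℕ} (h : s.par c = p)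
    (hcx : s.IsAnc c x) : s.IsAnc p x := by
  obtain ⟨k, hk⟩ := hcx
  exact ⟨k + 1, by rw [Function.iterate_succ_apply', hk, h]⟩

lemma FTreeAux.lca_of_children (s : FTree) {c1 c2 p : ℕ} (hp : p ∈ s.supp)
    (h1 : s.par c1 = p) (h2 : s.par c2 = p) (hne : c1 ≠ c2) :
    s.IsLCA c1 c2 p := by
  refine ⟨hp, ⟨1, by rw [Function.iterate_one]; exact h1⟩,
    ⟨1, by rw [Function.iterate_one]; exact h2⟩, ?_⟩
  rintro m hm ⟨a, ha⟩ ⟨b, hb⟩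
  match a with
  | 0 =>
    match b with
    | 0 => exact absurd (ha.trans hb.symm) hne
    | Nat.succ b' =>
      rw [Function.iterate_succ_apply, h2] at hb
      exact ⟨b', hb⟩
  | Nat.succ a' =>
    rw [Function.iterate_succ_apply, h1] at ha
    exact ⟨a', ha⟩

/-- Let `θ` be obtained from `t` by adding a new vertex `w` as a child
of `v`, the vertices of the subset `C` of the children of `v` becoming children of `w`.
The induced mapping `M_{t→θ}` (each vertex of `t` is sent to itself in `θ`) is a
constrained mapping in the sense of Zhang if and only if `C` is empty, `C` has exactly
one element, or `C` is the whole set of children of `v`. -/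
theorem zhangMapping_insert_iff (t θ : FTree) (v w : ℕ) (C : Finset ℕ)
    (hv : v ∈ t.supp) (hw : w ∉ t.supp) (hC : C ⊆ t.children v)
    (hsupp : θ.supp = insert w t.supp) (hroot : θ.root = t.root)
    (hparw : θ.par w = v) (hparC : ∀ x ∈ C, θ.par x = w)
    (hpar : ∀ x ∈ t.supp, x ∉ C → θ.par x = t.par x) :
    FTree.ZhangMapping t θ t.supp id ↔
      (C = ∅ ∨ C.card = 1 ∨ C = t.children v) := by
  have hwθ : w ∈ θ.supp := by rw [hsupp]; exact Finset.mem_insert_self _ _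
  have hmemθ : ∀ {x : ℕ}, x ∈ t.supp → x ∈ θ.supp := fun hx => by
    rw [hsupp]; exact Finset.mem_insert_of_mem hx
  constructor
  · intro hZ
    by_contra hcon
    push_neg at hcon
    obtain ⟨hne, hcard, hfull⟩ := hcon
    have h2 : 1 < C.card := by
      rcases Finset.eq_empty_or_nonempty C with h | h
      · exact absurd h (Finset.nonempty_iff_ne_empty.mp hne)
      · have := Finset.Nonempty.card_pos h; omega
    obtain ⟨c1, hc1, c2, hc2, hc12⟩ := Finset.one_lt_card.mp h2
    obtain ⟨c3, hc3, hc3C⟩ := Finset.exists_of_ssubset (hC.ssubset_of_ne hfull)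
    have hc1ch := FTreeAux.mem_children t (hC hc1)
    have hc2ch := FTreeAux.mem_children t (hC hc2)
    have hc3ch := FTreeAux.mem_children t hc3
    have hLt : t.IsLCA c1 c2 v :=
      FTreeAux.lca_of_children t hv hc1ch.2.1 hc2ch.2.1 hc12
    have hLθ : θ.IsLCA c1 c2 w :=
      FTreeAux.lca_of_children θ hwθ (hparC c1 hc1) (hparC c2 hc2) hc12
    have hPt : t.ProperAnc v c3 := by
      refine ⟨fun h => hc3ch.2.2 ?_, ⟨1, by rw [Function.iterate_one]; exact hc3ch.2.1⟩⟩
      exact FTreeAux.fix_eq_root t hc3ch.1 (by rw [hc3ch.2.1, h])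
    have hPθ : θ.ProperAnc w c3 :=
      (hZ.2.2.2.2 c1 hc1ch.1 c2 hc2ch.1 c3 hc3ch.1 v w hLt hLθ).mp hPt
    obtain ⟨c', hc'C, hc'anc⟩ :=
      FTreeAux.underW hv hw hC hsupp hparw hparC hpar hc3ch.1 hPθ.2
    have hc'ch := FTreeAux.mem_children t (hC hc'C)
    obtain ⟨k, hk⟩ := hc'anc
    match k with
    | 0 =>
      rw [Function.iterate_zero_apply] at hk
      exact hc3C (by rw [hk]; exact hc'C)
    | Nat.succ k' =>
      rw [Function.iterate_succ_apply, hc3ch.2.1] at hk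
      have hvc' : v = c' :=
        FTreeAux.anc_antisymm t hv ⟨1, by rw [Function.iterate_one]; exact hc'ch.2.1⟩ ⟨k', hk⟩
      have hpv : t.par v = v := by rw [hvc']; exact hc'ch.2.1.trans hvc'
      have hvr : v = t.root := FTreeAux.fix_eq_root t hv hpv
      exact hc'ch.2.2 (hvc'.symm.trans hvr)
  · intro hcase
    refine ⟨subset_rfl, fun x hx => hmemθ hx, Function.injective_id.injOn,
      fun a ha b hb => ?_, ?_⟩
    · simp only [id_eq]
      exact and_congr_right fun _ =>
        FTreeAux.anc_iff hv hw hC hparw hparC hpar ha hb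
    · intro v1 h1 v2 h2 v3 h3 l l' hL hL'
      simp only [id_eq] at hL' ⊢
      obtain ⟨hlmem, hl1, hl2, hlmax⟩ := hL
      obtain ⟨hl'mem, hl'1, hl'2, hl'max⟩ := hL'
      have hfwd : ∀ {a b : ℕ}, b ∈ t.supp → t.IsAnc a b → θ.IsAnc a b :=
        fun hb h => FTreeAux.fwd hC hparw hparC hpar hb h
      have hbwd : ∀ {a b : ℕ}, a ∈ t.supp → b ∈ t.supp → θ.IsAnc a b → t.IsAnc a b := by
        intro a b ha hb h
        obtain ⟨n, hn⟩ := h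
        exact FTreeAux.bwd hv hw hC hparw hparC hpar ha n hb hn
      rw [hsupp, Finset.mem_insert] at hl'mem
      rcases hl'mem with hl'w | hl's
      · -- l' = w
        rw [hl'w] at hl'1 hl'2 hl'max ⊢
        obtain ⟨c1, hc1C, hc1a⟩ :=
          FTreeAux.underW hv hw hC hsupp hparw hparC hpar h1 hl'1
        obtain ⟨c2, hc2C, hc2a⟩ :=
          FTreeAux.underW hv hw hC hsupp hparw hparC hpar h2 hl'2
        have hno : ∀ c ∈ C, ¬ t.IsAnc c l := by
          intro c hcC hcl
          obtain ⟨m, hm⟩ := hfwd hlmem hcl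
          have hwl : θ.IsAnc w l :=
            ⟨m + 1, by rw [Function.iterate_succ_apply', hm, hparC c hcC]⟩
          have hlw : θ.IsAnc l w :=
            hl'max l (hmemθ hlmem) (hfwd h1 hl1) (hfwd h2 hl2)
          exact hw (FTreeAux.anc_antisymm θ (hmemθ hlmem) hlw hwl ▸ hlmem)
        rcases hcase with rfl | hcard | rfl
        · exact absurd hc1C (Finset.notMem_empty c1)
        · obtain ⟨c, hc⟩ := Finset.card_eq_one.mp hcard
          subst hc
          rw [Finset.mem_singleton] at hc1C hc2C
          have h12 : c2 = c1 := hc2C.trans hc1C.symm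
          have : t.IsAnc c1 l :=
            hlmax c1 (FTreeAux.mem_children t (hC (by simp [hc1C]))).1 hc1a (h12 ▸ hc2a)
          exact absurd this (hno c1 (by simp [hc1C]))
        · -- C = children v
          have hc1ch := FTreeAux.mem_children t (hC hc1C)
          have hc2ch := FTreeAux.mem_children t (hC hc2C)
          have hlc1 : t.IsAnc l c1 := by
            rcases FTreeAux.anc_total t hl1 hc1a with h | h
            · exact h
            · exact absurd h (hno c1 hc1C)
          obtain ⟨m, hm⟩ := hlc1
          have hlv : t.IsAnc l v := by
            match m with
            | 0 => exact absurd ⟨0, hm.symm⟩ (hno c1 hc1C)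
            | Nat.succ m' =>
              rw [Function.iterate_succ_apply, hc1ch.2.1] at hm
              exact ⟨m', hm⟩
          have hvl : t.IsAnc v l :=
            hlmax v hv (FTreeAux.anc_top t hc1ch.2.1 hc1a)
              (FTreeAux.anc_top t hc2ch.2.1 hc2a)
          have hveq : v = l := FTreeAux.anc_antisymm t hv hvl hlv
          subst hveq
          constructor
          · rintro ⟨hnev3, hanc⟩
            have hex : ∃ n, t.par^[n] v3 = v := hanc
            have hn0 := Nat.find_spec hex
            have hn0pos : Nat.find hex ≠ 0 := by
              intro h; rw [h] at hn0; exact hnev3 hn0.symm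
            obtain ⟨k, hk⟩ := Nat.exists_eq_succ_of_ne_zero hn0pos
            set d := t.par^[k] v3 with hd
            have hdpar : t.par d = v := by
              have h' := hn0
              rw [hk, Function.iterate_succ_apply'] at h'
              rw [hd]; exact h'
            have hdne : d ≠ v := Nat.find_min hex (by omega)
            have hdsupp : d ∈ t.supp := FTreeAux.iter_mem t h3 k
            have hdroot : d ≠ t.root := by
              intro h
              have hvr : v = t.root := by
                rw [← t.par_root, ← h, hdpar]
              exact hdne (h.trans hvr.symm)
            have hdC : d ∈ t.children v :=
              Finset.mem_filter.mpr ⟨hdsupp, hdpar, hdroot⟩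
            obtain ⟨p, hp⟩ := hfwd h3 ⟨k, rfl⟩
            exact ⟨fun h => hw (h ▸ h3),
              ⟨p + 1, by rw [Function.iterate_succ_apply', hp, hparC d hdC]⟩⟩
          · rintro ⟨hnev3, hanc⟩
            obtain ⟨c, hcC, hca⟩ :=
              FTreeAux.underW hv hw hC hsupp hparw hparC hpar h3 hanc
            refine ⟨?_, FTreeAux.anc_top t (FTreeAux.mem_children t (hC hcC)).2.1 hca⟩
            intro heq
            have hanc' : θ.IsAnc w v := heq ▸ hanc
            have : v = w := FTreeAux.anc_antisymm θ (hmemθ hv)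
              ⟨1, by rw [Function.iterate_one]; exact hparw⟩ hanc'
            exact hw (this ▸ hv)
      · -- l' ∈ t.supp
        have hll' : θ.IsAnc l l' :=
          hl'max l (hmemθ hlmem) (hfwd h1 hl1) (hfwd h2 hl2)
        have hl'l : t.IsAnc l' l :=
          hlmax l' hl's (hbwd hl's h1 hl'1) (hbwd hl's h2 hl'2)
        have : l' = l :=
          FTreeAux.anc_antisymm θ (hmemθ hl's) (hfwd hlmem hl'l) hll'
        subst this
        exact and_congr_right fun _ =>
          FTreeAux.anc_iff hv hw hC hparw hparC hpar hlmem h3
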